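/- Let π = (p_1,...,p_n) be a sequence of distinct keys avoiding the pattern (2,3,1) (i.e., there are no indices i < j < k with p_k < p_i < p_j). Then the total cost of insertion splaying π, starting from the empty tree, is at most 6n. -/

import Mathlib

/-- Binary trees with keys at internal nodes. -/
inductive BT (α : Type) where
  | leaf : BT α
  | node : BT α → α → BT α → BT α
deriving DecidableEq

namespace BT

variable {α : Type} [LinearOrder α]

/-- The list of keys of a tree, in symmetric (inorder) order. -/
def keys : BT α → List α
  | leaf => []
  | node l v r => keys l ++ v :: keys r

/-- The number of nodes of a tree. -/
def size : BT α → ℕ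
  | leaf => 0
  | node l _ r => size l + size r + 1

/-- The symmetric-order (binary search tree) property. -/
def IsBST : BT α → Prop
  | leaf => True
  | node l v r => (∀ x ∈ l.keys, x < v) ∧ (∀ x ∈ r.keys, v < x) ∧ l.IsBST ∧ r.IsBST

/-- Preorder of a binary tree: root, then left subtree, then right subtree. -/
def preorder : BT α → List α
  | leaf => []
  | node l v r => v :: (preorder l ++ preorder r)

/-- Postorder of a binary tree: left subtree, right subtree, then root. -/
def postorder : BT α → List α
  | leaf => []
  | node l v r => postorder l ++ postorder r ++ [v]

/-- Reversed preorder: root, then right subtree, then left subtree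
(the preorder of the mirror image). -/
def revPreorder : BT α → List α
  | leaf => []
  | node l v r => v :: (revPreorder r ++ revPreorder l)

/-- Standard leaf insertion into a binary search tree. -/
def insertKey : BT α → α → BT α
  | leaf, x => node leaf x leaf
  | node l v r, x =>
    if x < v then node (insertKey l x) v r
    else if v < x then node l v (insertKey r x)
    else node l v r

/-- The depth (number of edges from the root) of the node with key `x`,
located by binary search. -/
def depthOf : BT α → α → ℕ
  | leaf, _ => 0
  | node l v r, x =>
    if x < v then depthOf l x + 1
    else if v < x then depthOf r x + 1
    else 0

/-- The search path to the key `x`: `false` records a step to a left child,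
`true` a step to a right child. -/
def pathTo : BT α → α → List Bool
  | leaf, _ => []
  | node l v r, x =>
    if x < v then false :: pathTo l x
    else if v < x then true :: pathTo r x
    else []

/-- The left-depth of the node with key `x`: the number of left-child edges
on the path from the root to it. -/
def leftDepthKey : BT α → α → ℕ
  | leaf, _ => 0
  | node l v r, x =>
    if x < v then leftDepthKey l x + 1
    else if v < x then leftDepthKey r x
    else 0

/-- The subtree rooted at the node with key `x` (empty if `x` is absent). -/
def subtreeAt : BT α → α → BT α
  | leaf, _ => leaf
  | node l v r, x =>
    if x < v then subtreeAt l x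
    else if v < x then subtreeAt r x
    else node l v r

/-- The key at the root, if any. -/
def rootKey : BT α → Option α
  | leaf => none
  | node _ v _ => some v

/-- The key of the parent of the node with key `x`, if any. -/
def parentKey : BT α → α → Option α
  | leaf, _ => none
  | node l v r, x =>
    if x < v then (if l.rootKey = some x then some v else l.parentKey x)
    else if v < x then (if r.rootKey = some x then some v else r.parentKey x)
    else none

/-- A step of the context (zipper) describing the search path from the root
to the current subtree: `inL v r` means the current subtree is the left child
of a node with key `v` and right subtree `r`; `inR l v` means it is the right
child of a node with key `v` and left subtree `l`. -/
inductive Ctx (α : Type) where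
  | inL : α → BT α → Ctx α
  | inR : BT α → α → Ctx α

/-- Descend along the search path for `x`, recording the context.
The head of the returned list corresponds to the immediate parent. -/
def descend : BT α → α → List (Ctx α) → List (Ctx α) × BT α
  | leaf, _, acc => (acc, leaf)
  | node l v r, x, acc =>
    if x < v then descend l x (Ctx.inL v r :: acc)
    else if v < x then descend r x (Ctx.inR l v :: acc)
    else (acc, node l v r)

/-- Reattach a subtree into its context, with no rotations. -/
def rebuild : BT α → List (Ctx α) → BT α
  | t, [] => t
  | t, Ctx.inL v r :: cs => rebuild (node t v r) cs
  | t, Ctx.inR l v :: cs => rebuild (node l v t) cs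

/-- Bottom-up splay steps: repeatedly apply zig / zig-zig / zig-zag steps to
the current subtree (rooted at the node being splayed) until the context is
exhausted. -/
def splayLoop : BT α → List (Ctx α) → BT α
  | t, [] => t
  | node a x b, [Ctx.inL v r] => node a x (node b v r)          -- zig
  | node a x b, [Ctx.inR l v] => node (node l v a) x b          -- zig
  | node a x b, Ctx.inL p pr :: Ctx.inL g gr :: cs =>           -- zig-zig
      splayLoop (node a x (node b p (node pr g gr))) cs
  | node a x b, Ctx.inL p pr :: Ctx.inR gl g :: cs =>           -- zig-zag
      splayLoop (node (node gl g a) x (node b p pr)) cs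
  | node a x b, Ctx.inR pl p :: Ctx.inR gl g :: cs =>           -- zig-zig
      splayLoop (node (node (node gl g pl) p a) x b) cs
  | node a x b, Ctx.inR pl p :: Ctx.inL g gr :: cs =>           -- zig-zag
      splayLoop (node (node pl p a) x (node b g gr)) cs
  | leaf, cs => rebuild leaf cs   -- unreachable when the splayed key is present

/-- Splaying the key `x`: if `x` occurs in the tree, bring its node to the
root by bottom-up splay steps; otherwise leave the tree unchanged. -/
def splay (x : α) (t : BT α) : BT α :=
  match descend t x [] with
  | (_, leaf) => t
  | (cs, found) => splayLoop found cs

/-- `α`-weight-balance in the sense of Nievergelt–Reingold: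
at each node, `min(|L|,|R|) + 1 ≥ α * (|x| + 1)`. -/
def WeightBalanced (a : ℝ) : BT α → Prop
  | leaf => True
  | node l _ r =>
      (min l.size r.size + 1 : ℝ) ≥ a * ((l.size + r.size + 1 : ℕ) + 1 : ℝ) ∧
      WeightBalanced a l ∧ WeightBalanced a r

/-- The rank of `x` in `t`: the number of keys of `t` that are `≤ x`. -/
def rank (t : BT α) (x : α) : ℕ := (t.keys.filter (fun y => y ≤ x)).length

end BT

section Defs

variable {α : Type} [LinearOrder α]

/-- The insertion tree of a sequence: leaf-insert the keys in order. -/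
def bstOf (π : List α) : BT α := π.foldl BT.insertKey BT.leaf

/-- `q` is a sub-root: a node of `t` not yet touched whose parent is touched,
where `touched` is the list of touched keys. -/
def IsSubRoot (t : BT α) (touched : List α) (q : α) : Prop :=
  q ∈ t.keys ∧ q ∉ touched ∧ ∃ p, t.parentKey q = some p ∧ p ∈ touched

/-- π avoids the pattern (2,3,1). -/
def Avoids231 (π : List α) : Prop :=
  ¬ ∃ i j k : Fin π.length, i < j ∧ j < k ∧ π.get k < π.get i ∧ π.get i < π.get j

/-- π avoids the pattern (3,1,2). -/
def Avoids312 (π : List α) : Prop :=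
  ¬ ∃ i j k : Fin π.length, i < j ∧ j < k ∧ π.get j < π.get k ∧ π.get k < π.get i

/-- π avoids the pattern (2,1,3). -/
def Avoids213 (π : List α) : Prop :=
  ¬ ∃ i j k : Fin π.length, i < j ∧ j < k ∧ π.get j < π.get i ∧ π.get i < π.get k

/-- π contains a strictly decreasing subsequence of length `k`. -/
def HasDecreasingSubseq (π : List α) (k : ℕ) : Prop :=
  ∃ s : List α, s.Sublist π ∧ s.length = k ∧ s.Chain' (· > ·)

/-- Splay the keys of a list in order, starting from `t`. -/
def splaySeq (π : List α) (t : BT α) : BT α := π.foldl (fun s x => BT.splay x s) t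

/-- The cost of splaying a sequence of keys starting from `t`:
each splay costs the current depth of the requested key plus one. -/
def splayCost : BT α → List α → ℕ
  | _, [] => 0
  | t, x :: xs => (t.depthOf x + 1) + splayCost (BT.splay x t) xs

/-- The cost of insertion splaying a sequence of keys starting from `t`:
each key is leaf-inserted, then the new node is splayed, at a cost of
its depth after insertion plus one. -/
def insertSplayCost : BT α → List α → ℕ
  | _, [] => 0
  | t, x :: xs =>
    ((t.insertKey x).depthOf x + 1) + insertSplayCost (BT.splay x (t.insertKey x)) xs

/-- `DF rk xs` = Σ_{i≥2} log₂(|rk(x_i) − rk(x_{i−1})| + 1). -/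
noncomputable def DF (rk : α → ℕ) (xs : List α) : ℝ :=
  ((xs.zip xs.tail).map
    (fun p => Real.logb 2 (|(rk p.2 : ℝ) - (rk p.1 : ℝ)| + 1))).sum

/-- The rank of `x` within the sequence `σ` itself. -/
def rankIn (σ : List α) (x : α) : ℕ := (σ.filter (fun y => y ≤ x)).length

/-- The dynamic-finger sum of a sequence, with ranks computed in the
sequence itself. -/
noncomputable def DFseq (σ : List α) : ℝ := DF (rankIn σ) σ

end Defs


section ISPAux

namespace ISP

open BT

variable {α : Type} [LinearOrder α]

/-- Length of the right spine. -/
def rsp : BT α → ℕ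
  | .leaf => 0
  | .node _ _ r => rsp r + 1

/-- Keys on the right spine. -/
def rkeys : BT α → List α
  | .leaf => []
  | .node _ v r => v :: rkeys r

/-- The potential function. -/
def phi : BT α → ℕ
  | .leaf => 0
  | .node l _ r => (3 + (if l = BT.leaf then 0 else 1) + 2 * rsp l) + phi r

/-- Rebuild a tree from a spine listing (top-down) and a bottom tree. -/
def fromSpine : List (BT α × α) → BT α → BT α
  | [], m => m
  | (A, s) :: L, m => .node A s (fromSpine L m)

/-- The right-spine decomposition of a tree. -/
def rsPairs : BT α → List (BT α × α)
  | .leaf => []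
  | .node l v r => (l, v) :: rsPairs r

def fCtx (p : BT α × α) : BT.Ctx α := .inR p.1 p.2

/-- Accumulate the final left subtree of a splayed node. -/
def accL : BT α → List (BT.Ctx α) → BT α
  | t, [] => t
  | t, [.inL _ _] => t
  | t, [.inR l v] => .node l v t
  | t, .inL _ _ :: .inL _ _ :: cs => accL t cs
  | t, .inL _ _ :: .inR gl g :: cs => accL (.node gl g t) cs
  | t, .inR pl p :: .inR gl g :: cs => accL (.node (.node gl g pl) p t) cs
  | t, .inR pl p :: .inL _ _ :: cs => accL (.node pl p t) cs

/-- Accumulate the final right subtree of a splayed node. -/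
def accR : BT α → List (BT.Ctx α) → BT α
  | t, [] => t
  | t, [.inL v r] => .node t v r
  | t, [.inR _ _] => t
  | t, .inL p pr :: .inL g gr :: cs => accR (.node t p (.node pr g gr)) cs
  | t, .inL p pr :: .inR _ _ :: cs => accR (.node t p pr) cs
  | t, .inR _ _ :: .inR _ _ :: cs => accR t cs
  | t, .inR _ _ :: .inL g gr :: cs => accR (.node t g gr) cs

theorem splayLoop_acc : ∀ (n : ℕ) (cs : List (BT.Ctx α)), cs.length ≤ n →
    ∀ (a : BT α) (x : α) (b : BT α),
    BT.splayLoop (.node a x b) cs = .node (accL a cs) x (accR b cs) := by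
  intro n
  induction n with
  | zero =>
    intro cs h a x b
    match cs with
    | [] => rfl
  | succ n ih =>
    intro cs h a x b
    match cs with
    | [] => rfl
    | [c] => cases c <;> rfl
    | c1 :: c2 :: cs =>
      simp only [List.length_cons] at h
      cases c1 <;> cases c2 <;>
        (simp only [BT.splayLoop, accL, accR]; exact ih cs (by omega) _ _ _)


set_option linter.unusedSectionVars false

theorem accR_mapR : ∀ (n : ℕ) (L : List (BT α × α)), L.length ≤ n → ∀ (b : BT α),
    accR b (L.map fCtx) = b := by
  intro n
  induction n with
  | zero => intro L h b; match L with | [] => rfl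
  | succ n ih =>
    intro L h b
    match L with
    | [] => rfl
    | [p] => rfl
    | p :: q :: L =>
      simp only [List.length_cons] at h
      simp only [List.map, fCtx, accR]
      exact ih L (by omega) b

theorem accR_main : ∀ (n : ℕ) (L : List (BT α × α)), L.length ≤ n →
    ∀ (b : BT α) (u : α) (Ur : BT α) (L2 : List (BT α × α)),
    accR b (L.map fCtx ++ .inL u Ur :: L2.map fCtx) = .node b u Ur := by
  intro n
  induction n with
  | zero =>
    intro L h b u Ur L2
    match L with
    | [] =>
      match L2 with
      | [] => rfl
      | p :: L2 =>
        simp only [List.map, fCtx, List.nil_append, accR]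
        exact accR_mapR (L2.length) L2 le_rfl _
  | succ n ih =>
    intro L h b u Ur L2
    match L with
    | [] =>
      match L2 with
      | [] => rfl
      | p :: L2 =>
        simp only [List.map, fCtx, List.nil_append, accR]
        exact accR_mapR (L2.length) L2 le_rfl _
    | [p] =>
      simp only [List.map, fCtx, List.cons_append, List.nil_append, accR]
      exact accR_mapR (L2.length) L2 le_rfl _
    | p :: q :: L =>
      simp only [List.length_cons] at h
      simp only [List.map, fCtx, List.cons_append, accR]
      exact ih L (by omega) b u Ur L2

theorem accL_mapR : ∀ (n : ℕ) (L : List (BT α × α)), L.length ≤ n → ∀ (t : BT α),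
    2 * rsp (accL t (L.map fCtx)) ≤
      2 * rsp t + L.length + (if L = [] then 0 else 1) := by
  intro n
  induction n with
  | zero => intro L h t; match L with | [] => simp [accL]
  | succ n ih =>
    intro L h t
    match L with
    | [] => simp [accL]
    | [p] => simp [accL, fCtx, rsp]; omega
    | p :: q :: L =>
      simp only [List.length_cons] at h
      simp only [List.map, fCtx, accL]
      have := ih L (by omega) (.node (.node q.1 q.2 p.1) p.2 t)
      simp only [rsp] at this ⊢
      have h2 : (if L = [] then 0 else 1) ≤ 1 := by split <;> omega
      simp only [List.length_cons]
      rw [if_neg (by simp : ¬(p :: q :: L = []))]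
      omega

theorem accL_main : ∀ (n : ℕ) (L : List (BT α × α)), L.length ≤ n →
    ∀ (t : BT α) (u : α) (Ur : BT α) (L2 : List (BT α × α)),
    2 * rsp (accL t (L.map fCtx ++ .inL u Ur :: L2.map fCtx)) ≤
      2 * rsp t + 2 * L2.length + L.length + (if L = [] then 0 else 1) := by
  intro n
  induction n with
  | zero =>
    intro L h t u Ur L2
    match L with
    | [] =>
      match L2 with
      | [] => simp [accL]
      | p :: L2 =>
        simp only [List.map, fCtx, List.nil_append, accL]
        have := accL_mapR (L2.length) L2 le_rfl (.node p.1 p.2 t)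
        simp only [rsp] at this ⊢
        simp only [List.length_cons]
        have h2 : (if L2 = [] then (0:ℕ) else 1) ≤ 1 := by split <;> omega
        rcases L2 with _ | _ <;> simp_all <;> omega
  | succ n ih =>
    intro L h t u Ur L2
    match L with
    | [] =>
      match L2 with
      | [] => simp [accL]
      | p :: L2 =>
        simp only [List.map, fCtx, List.nil_append, accL]
        have := accL_mapR (L2.length) L2 le_rfl (.node p.1 p.2 t)
        simp only [rsp] at this ⊢
        simp only [List.length_cons]
        have h2 : (if L2 = [] then (0:ℕ) else 1) ≤ 1 := by split <;> omega
        rcases L2 with _ | _ <;> simp_all <;> omega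
    | [p] =>
      simp only [List.map, fCtx, List.cons_append, List.nil_append, accL]
      have := accL_mapR (L2.length) L2 le_rfl (.node p.1 p.2 t)
      simp only [rsp] at this ⊢
      have h2 : (if L2 = [] then (0:ℕ) else 1) ≤ 1 := by split <;> omega
      have h3 : (if L2 = [] then (0:ℕ) else 1) ≤ L2.length := by
        rcases L2 with _ | _ <;> simp
      simp only [List.length_cons]
      rw [if_neg (by simp : ¬([p] = []))]
      omega
    | p :: q :: L =>
      simp only [List.length_cons] at h
      simp only [List.map, fCtx, List.cons_append, accL]
      have := ih L (by omega) (.node (.node q.1 q.2 p.1) p.2 t) u Ur L2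
      simp only [rsp, List.append_eq] at this ⊢
      have h2 : (if L = [] then (0:ℕ) else 1) ≤ 1 := by split <;> omega
      simp only [List.length_cons]
      rw [if_neg (by simp : ¬(p :: q :: L = []))]
      omega


theorem rsp_fromSpine : ∀ (L : List (BT α × α)) (m : BT α),
    rsp (fromSpine L m) = L.length + rsp m := by
  intro L
  induction L with
  | nil => intro m; simp [fromSpine]
  | cons p L ih => intro m; simp [fromSpine, rsp, ih]; omega

def wgt (p : BT α × α) : ℕ := 3 + (if p.1 = BT.leaf then 0 else 1) + 2 * rsp p.1

theorem phi_fromSpine : ∀ (L : List (BT α × α)) (m : BT α),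
    phi (fromSpine L m) = (L.map wgt).sum + phi m := by
  intro L
  induction L with
  | nil => intro m; simp [fromSpine]
  | cons p L ih => intro m; simp [fromSpine, phi, ih, wgt]; omega

theorem wgt_sum_ge (L : List (BT α × α)) : 3 * L.length ≤ (L.map wgt).sum := by
  induction L with
  | nil => simp
  | cons p L ih => simp [wgt]; omega

theorem rkeys_fromSpine : ∀ (L : List (BT α × α)) (m : BT α),
    rkeys (fromSpine L m) = L.map Prod.snd ++ rkeys m := by
  intro L
  induction L with
  | nil => intro m; simp [fromSpine]
  | cons p L ih => intro m; simp [fromSpine, rkeys, ih]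

theorem fromSpine_rsPairs : ∀ (t : BT α), fromSpine (rsPairs t) .leaf = t := by
  intro t
  induction t with
  | leaf => rfl
  | node l v r ihl ihr => simp [rsPairs, fromSpine, ihr]

theorem rsPairs_snd_mem : ∀ (t : BT α) (p : BT α × α), p ∈ rsPairs t → p.2 ∈ rkeys t := by
  intro t
  induction t with
  | leaf => simp [rsPairs]
  | node l v r ihl ihr =>
    intro p hp
    simp only [rsPairs, List.mem_cons] at hp
    rcases hp with h | h
    · simp [h, rkeys]
    · simp only [rkeys, List.mem_cons]
      exact Or.inr (ihr p h)

theorem rkeys_sub : ∀ (t : BT α), ∀ y ∈ rkeys t, y ∈ BT.keys t := by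
  intro t
  induction t with
  | leaf => simp [rkeys]
  | node l v r ihl ihr =>
    intro y hy
    simp only [rkeys, List.mem_cons] at hy
    simp only [BT.keys, List.mem_append, List.mem_cons]
    rcases hy with h | h
    · exact Or.inr (Or.inl h)
    · exact Or.inr (Or.inr (ihr y h))

theorem insertKey_fromSpine {x : α} : ∀ (L : List (BT α × α)) (m : BT α),
    (∀ p ∈ L, p.2 < x) →
    BT.insertKey (fromSpine L m) x = fromSpine L (BT.insertKey m x) := by
  intro L
  induction L with
  | nil => intro m h; rfl
  | cons p L ih =>
    intro m h
    have h1 : p.2 < x := h p (List.mem_cons_self)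
    simp only [fromSpine, BT.insertKey, if_neg (not_lt.2 h1.le), if_pos h1]
    rw [ih m (fun q hq => h q (List.mem_cons_of_mem _ hq))]

theorem depthOf_fromSpine {x : α} : ∀ (L : List (BT α × α)) (m : BT α),
    (∀ p ∈ L, p.2 < x) →
    BT.depthOf (fromSpine L m) x = L.length + BT.depthOf m x := by
  intro L
  induction L with
  | nil => intro m h; simp [fromSpine]
  | cons p L ih =>
    intro m h
    have h1 : p.2 < x := h p (List.mem_cons_self)
    simp only [fromSpine, BT.depthOf, if_neg (not_lt.2 h1.le), if_pos h1]
    rw [ih m (fun q hq => h q (List.mem_cons_of_mem _ hq))]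
    simp [List.length_cons]; omega

/-- Contexts pushed while descending a spine. -/
def ctxs : List (BT α × α) → List (BT.Ctx α) → List (BT.Ctx α)
  | [], acc => acc
  | p :: L, acc => ctxs L (fCtx p :: acc)

theorem ctxs_eq : ∀ (L : List (BT α × α)) (acc : List (BT.Ctx α)),
    ctxs L acc = L.reverse.map fCtx ++ acc := by
  intro L
  induction L with
  | nil => intro acc; simp [ctxs]
  | cons p L ih => intro acc; simp [ctxs, ih]

theorem descend_fromSpine {x : α} : ∀ (L : List (BT α × α)) (m : BT α)
    (acc : List (BT.Ctx α)), (∀ p ∈ L, p.2 < x) →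
    BT.descend (fromSpine L m) x acc = BT.descend m x (ctxs L acc) := by
  intro L
  induction L with
  | nil => intro m acc h; rfl
  | cons p L ih =>
    intro m acc h
    have h1 : p.2 < x := h p (List.mem_cons_self)
    simp only [fromSpine, BT.descend, if_neg (not_lt.2 h1.le), if_pos h1]
    exact ih m _ (fun q hq => h q (List.mem_cons_of_mem _ hq))


theorem keys_rebuild_congr : ∀ (cs : List (BT.Ctx α)) (t t' : BT α),
    BT.keys t = BT.keys t' → BT.keys (BT.rebuild t cs) = BT.keys (BT.rebuild t' cs) := by
  intro cs
  induction cs with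
  | nil => intro t t' h; simpa [BT.rebuild] using h
  | cons c cs ih =>
    intro t t' h
    cases c with
    | inL v r => exact ih _ _ (by simp [BT.keys, h])
    | inR l v => exact ih _ _ (by simp [BT.keys, h])

theorem keys_splayLoop : ∀ (n : ℕ) (cs : List (BT.Ctx α)), cs.length ≤ n → ∀ (t : BT α),
    BT.keys (BT.splayLoop t cs) = BT.keys (BT.rebuild t cs) := by
  intro n
  induction n with
  | zero =>
    intro cs h t
    match cs with
    | [] => cases t <;> rfl
  | succ n ih =>
    intro cs h t
    match cs, t with
    | [], t => cases t <;> rfl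
    | c :: cs', .leaf => simp [BT.splayLoop]
    | [c], .node a x b =>
      cases c <;> simp [BT.splayLoop, BT.rebuild, BT.keys, List.append_assoc]
    | c1 :: c2 :: cs', .node a x b =>
      simp only [List.length_cons] at h
      cases c1 <;> cases c2 <;>
        (simp only [BT.splayLoop, BT.rebuild]
         rw [ih cs' (by omega)]
         exact keys_rebuild_congr _ _ _ (by simp [BT.keys, List.append_assoc]))

theorem descend_rebuild {x : α} : ∀ (t : BT α) (acc : List (BT.Ctx α)),
    BT.rebuild (BT.descend t x acc).2 (BT.descend t x acc).1 = BT.rebuild t acc := by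
  intro t
  induction t with
  | leaf => intro acc; rfl
  | node l v r ihl ihr =>
    intro acc
    simp only [BT.descend]
    rcases lt_trichotomy x v with h | h | h
    · rw [if_pos h]
      exact ihl _
    · rw [if_neg (by simp [h]), if_neg (by simp [h])]
    · rw [if_neg (not_lt.2 h.le), if_pos h]
      exact ihr _

theorem keys_splay (x : α) (t : BT α) : BT.keys (BT.splay x t) = BT.keys t := by
  unfold BT.splay
  rcases hd : BT.descend t x [] with ⟨cs, s⟩
  have hr := descend_rebuild (x := x) t []
  rw [hd] at hr
  cases s with
  | leaf => rfl
  | node a v b =>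
    simp only []
    rw [keys_splayLoop (cs.length) cs le_rfl]
    simp only [BT.rebuild] at hr
    rw [hr]

theorem keys_insertKey {x : α} : ∀ (t : BT α), x ∉ BT.keys t →
    (BT.insertKey t x).keys.Perm (x :: BT.keys t) := by
  intro t
  induction t with
  | leaf => simp [BT.insertKey, BT.keys]
  | node l v r ihl ihr =>
    intro hx
    simp only [BT.keys, List.mem_append, List.mem_cons] at hx
    push_neg at hx
    rcases lt_trichotomy x v with h | h | h
    · simp only [BT.insertKey, if_pos h, BT.keys]
      exact (ihl hx.1).append_right _
    · exact absurd h.symm (Ne.symm hx.2.1)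
    · simp only [BT.insertKey, if_neg (not_lt.2 h.le), if_pos h, BT.keys]
      have h1 : (BT.keys l ++ v :: (BT.insertKey r x).keys).Perm
          (BT.keys l ++ v :: (x :: BT.keys r)) :=
        List.Perm.append_left _ ((ihr hx.2.2).cons v)
      refine h1.trans ?_
      have : BT.keys l ++ v :: x :: BT.keys r = (BT.keys l ++ [v]) ++ x :: BT.keys r := by
        simp
      rw [this]
      have h2 : ((BT.keys l ++ [v]) ++ x :: BT.keys r).Perm
          (x :: ((BT.keys l ++ [v]) ++ BT.keys r)) := List.perm_middle
      refine h2.trans ?_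
      simp


theorem decomp (x : α) : ∀ (t : BT α), (BT.keys t).Nodup → x ∉ BT.keys t →
    (∀ y ∈ BT.keys t, x < y → y ∈ rkeys t) →
    ∃ low : List (BT α × α), (∀ p ∈ low, p.2 < x) ∧
      (t = fromSpine low .leaf ∨
       ∃ bs u Ur, x < u ∧ (∀ p ∈ bs, p.2 < x) ∧
         t = fromSpine low (.node (fromSpine bs .leaf) u Ur)) := by
  intro t
  induction t with
  | leaf => intro _ _ _; exact ⟨[], by simp, Or.inl rfl⟩
  | node l v r ihl ihr =>
    intro hnd hx hB
    have hndk : (BT.keys l ++ v :: BT.keys r).Nodup := by simpa [BT.keys] using hnd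
    have hvl : v ∉ BT.keys l := by
      have := (List.disjoint_of_nodup_append hndk)
      intro hm
      exact this hm (List.mem_cons_self)
    have hndr : (BT.keys r).Nodup := ((List.nodup_append.1 hndk).2.1).of_cons
    have hdisj : ∀ y ∈ BT.keys l, y ∉ v :: BT.keys r :=
      fun y hy => List.disjoint_of_nodup_append hndk hy
    simp only [BT.keys, List.mem_append, List.mem_cons] at hx
    push_neg at hx
    rcases lt_trichotomy v x with h | h | h
    · -- v < x : recurse into r
      obtain ⟨low, hlow, hrest⟩ := ihr hndr hx.2.2 (by
        intro y hy hxy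
        have hyt : y ∈ BT.keys (BT.node l v r) := by
          simp [BT.keys, List.mem_append, hy]
        have := hB y hyt hxy
        simp only [rkeys, List.mem_cons] at this
        rcases this with h1 | h1
        · exact absurd (h1 ▸ hxy) (not_lt.2 h.le)
        · exact h1)
      refine ⟨(l, v) :: low, ?_, ?_⟩
      · intro p hp
        rcases List.mem_cons.1 hp with h1 | h1
        · simp [h1, h]
        · exact hlow p h1
      · rcases hrest with h1 | ⟨bs, u, Ur, h2, h3, h4⟩
        · exact Or.inl (by simp [fromSpine, h1])
        · exact Or.inr ⟨bs, u, Ur, h2, h3, by simp [fromSpine, h4]⟩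
    · exact absurd h.symm hx.2.1
    · -- x < v : u = v
      refine ⟨[], by simp, Or.inr ⟨rsPairs l, v, r, h, ?_, ?_⟩⟩
      · intro p hp
        have hmem : p.2 ∈ BT.keys l := rkeys_sub l _ (rsPairs_snd_mem l p hp)
        by_contra hc
        push_neg at hc
        have hne : p.2 ≠ x := fun he => hx.1 (he ▸ hmem)
        have hxy : x < p.2 := lt_of_le_of_ne hc (Ne.symm hne)
        have hyt : p.2 ∈ BT.keys (BT.node l v r) := by
          simp [BT.keys, List.mem_append, hmem]
        have := hB p.2 hyt hxy
        simp only [rkeys, List.mem_cons] at this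
        rcases this with h1 | h1
        · exact hvl (h1 ▸ hmem)
        · exact hdisj _ hmem (List.mem_cons_of_mem _ (rkeys_sub r _ h1))
      · simp [fromSpine, fromSpine_rsPairs]


theorem step (t : BT α) (x : α) (hnd : (BT.keys t).Nodup) (hx : x ∉ BT.keys t)
    (hB : ∀ y ∈ BT.keys t, x < y → y ∈ rkeys t) :
    ∃ AC RT, BT.splay x (BT.insertKey t x) = .node AC x RT ∧
      ((BT.insertKey t x).depthOf x + 1) + phi (.node AC x RT) ≤ 6 + phi t ∧
      (∀ y ∈ rkeys t, x < y → y ∈ rkeys RT) := by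
  obtain ⟨low, hlow, hrest⟩ := decomp x t hnd hx hB
  rcases hrest with rfl | ⟨bs, u, Ur, hxu, hbs, rfl⟩
  · -- no-u case
    set CS : List (BT.Ctx α) := ctxs low [] with hCS
    have hCS' : CS = low.reverse.map fCtx := by simp [hCS, ctxs_eq]
    have hins : BT.insertKey (fromSpine low .leaf) x
        = fromSpine low (.node .leaf x .leaf) := by
      rw [insertKey_fromSpine low _ hlow]; rfl
    have hdep : (BT.insertKey (fromSpine low .leaf) x).depthOf x = low.length := by
      rw [hins, depthOf_fromSpine low _ hlow]
      simp [BT.depthOf]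
    have hdesc : BT.descend (BT.insertKey (fromSpine low .leaf) x) x []
        = (CS, .node .leaf x .leaf) := by
      rw [hins, descend_fromSpine low _ _ hlow]
      simp [BT.descend, hCS]
    have hsp : BT.splay x (BT.insertKey (fromSpine low .leaf) x)
        = .node (accL .leaf CS) x (accR .leaf CS) := by
      unfold BT.splay
      rw [hdesc]
      exact splayLoop_acc CS.length CS le_rfl _ _ _
    have hRT : accR (.leaf : BT α) CS = .leaf := by
      rw [hCS']; exact accR_mapR _ _ le_rfl _
    refine ⟨accL .leaf CS, .leaf, by rw [hsp, hRT], ?_, ?_⟩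
    · have hacc := accL_mapR (low.reverse.length) low.reverse le_rfl (.leaf : BT α)
      rw [← hCS'] at hacc
      have hS := wgt_sum_ge low
      have hite : (if low.reverse = [] then (0:ℕ) else 1) ≤ 1 := by split <;> omega
      have hite2 : (if accL (.leaf : BT α) CS = .leaf then (0:ℕ) else 1) ≤ 1 := by
        split <;> omega
      rw [hdep]
      simp only [phi, phi_fromSpine, rsp, List.length_reverse] at hacc ⊢
      omega
    · intro y hy hxy
      rw [rkeys_fromSpine] at hy
      simp only [rkeys, List.append_nil] at hy
      obtain ⟨p, hp, rfl⟩ := List.mem_map.1 hy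
      exact absurd hxy (not_lt.2 (hlow p hp).le)
  · -- with-u case
    set CS : List (BT.Ctx α) := ctxs bs (.inL u Ur :: ctxs low []) with hCS
    have hCS' : CS = bs.reverse.map fCtx ++ .inL u Ur :: low.reverse.map fCtx := by
      simp [hCS, ctxs_eq]
    have hins : BT.insertKey (fromSpine low (.node (fromSpine bs .leaf) u Ur)) x
        = fromSpine low (.node (fromSpine bs (.node .leaf x .leaf)) u Ur) := by
      rw [insertKey_fromSpine low _ hlow]
      simp only [BT.insertKey, if_pos hxu]
      rw [insertKey_fromSpine bs _ hbs]
      rfl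
    have hdep : (BT.insertKey (fromSpine low (.node (fromSpine bs .leaf) u Ur)) x).depthOf x
        = low.length + bs.length + 1 := by
      rw [hins, depthOf_fromSpine low _ hlow]
      simp only [BT.depthOf, if_pos hxu]
      rw [depthOf_fromSpine bs _ hbs]
      simp [BT.depthOf]
      omega
    have hdesc : BT.descend (BT.insertKey (fromSpine low (.node (fromSpine bs .leaf) u Ur)) x) x []
        = (CS, .node .leaf x .leaf) := by
      rw [hins, descend_fromSpine low _ _ hlow]
      simp only [BT.descend, if_pos hxu]
      rw [descend_fromSpine bs _ _ hbs]
      simp [BT.descend, hCS]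
    have hsp : BT.splay x (BT.insertKey (fromSpine low (.node (fromSpine bs .leaf) u Ur)) x)
        = .node (accL .leaf CS) x (accR .leaf CS) := by
      unfold BT.splay
      rw [hdesc]
      exact splayLoop_acc CS.length CS le_rfl _ _ _
    have hRT : accR (.leaf : BT α) CS = .node .leaf u Ur := by
      rw [hCS']; exact accR_main _ _ le_rfl _ _ _ _
    refine ⟨accL .leaf CS, .node .leaf u Ur, by rw [hsp, hRT], ?_, ?_⟩
    · have hacc := accL_main (bs.reverse.length) bs.reverse le_rfl (.leaf : BT α) u Ur
        low.reverse
      rw [← hCS'] at hacc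
      have hS := wgt_sum_ge low
      have hite : (if fromSpine bs (.leaf : BT α) = .leaf then (0:ℕ) else 1)
          = (if bs.reverse = [] then (0:ℕ) else 1) := by
        cases bs <;> simp [fromSpine]
      have hite2 : (if accL (.leaf : BT α) CS = .leaf then (0:ℕ) else 1) ≤ 1 := by
        split <;> omega
      rw [hdep]
      simp only [phi, phi_fromSpine, rsp, rsp_fromSpine, List.length_reverse,
        if_pos rfl, eq_self_iff_true, if_true] at hacc ⊢
      rw [hite]
      omega
    · intro y hy hxy
      rw [rkeys_fromSpine] at hy
      rcases List.mem_append.1 hy with h1 | h1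
      · obtain ⟨p, hp, rfl⟩ := List.mem_map.1 h1
        exact absurd hxy (not_lt.2 (hlow p hp).le)
      · exact h1


theorem get_succ' {x : α} {xs : List α} (i : Fin xs.length) :
    (x :: xs).get i.succ = xs.get i := rfl

theorem av_tail {x : α} {xs : List α} (h : Avoids231 (x :: xs)) : Avoids231 xs := by
  rintro ⟨i, j, k, h1, h2, h3, h4⟩
  refine h ⟨i.succ, j.succ, k.succ, ?_, ?_, ?_, ?_⟩
  · exact Nat.succ_lt_succ h1
  · exact Nat.succ_lt_succ h2
  · rw [get_succ', get_succ']; exact h3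
  · rw [get_succ', get_succ']; exact h4

theorem mainInd : ∀ (π : List α) (t : BT α),
    (BT.keys t).Nodup → (∀ y ∈ BT.keys t, y ∉ π) → π.Nodup → Avoids231 π →
    (∀ y ∈ BT.keys t, ∀ i j : Fin π.length, i < j → π.get j < y → y < π.get i → False) →
    (∀ y ∈ BT.keys t, ∀ x ∈ π, x < y → y ∈ rkeys t) →
    insertSplayCost t π ≤ 6 * π.length + phi t := by
  intro π
  induction π with
  | nil => intro t _ _ _ _ _ _; simp [insertSplayCost]
  | cons x xs ih =>
    intro t hnd hdis hpnd hav hG hB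
    have hxk : x ∉ BT.keys t := fun h => hdis x h (List.mem_cons_self)
    obtain ⟨AC, RT, hsp, hcost, hspine⟩ := step t x hnd hxk
      (fun y hy hxy => hB y hy x (List.mem_cons_self) hxy)
    have hperm : (BT.keys (BT.node AC x RT)).Perm (x :: BT.keys t) := by
      rw [← hsp, keys_splay]
      exact keys_insertKey t hxk
    have hnd' : (BT.keys (BT.node AC x RT)).Nodup := by
      rw [hperm.nodup_iff]
      exact List.nodup_cons.2 ⟨hxk, hnd⟩
    have hmem' : ∀ y, y ∈ BT.keys (BT.node AC x RT) ↔ (y = x ∨ y ∈ BT.keys t) := by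
      intro y; rw [hperm.mem_iff, List.mem_cons]
    have hxxs : x ∉ xs := (List.nodup_cons.1 hpnd).1
    have hget0 : (x :: xs).get ⟨0, Nat.succ_pos _⟩ = x := rfl
    have hres := ih (BT.node AC x RT) hnd'
      (by
        intro y hy hmem
        rcases (hmem' y).1 hy with rfl | hy'
        · exact hxxs hmem
        · exact hdis y hy' (List.mem_cons_of_mem _ hmem))
      (List.nodup_cons.1 hpnd).2 (av_tail hav)
      (by
        intro y hy i j hij h1 h2
        rcases (hmem' y).1 hy with rfl | hy'
        · refine hav ⟨⟨0, Nat.succ_pos _⟩, i.succ, j.succ, Nat.succ_pos _,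
            Nat.succ_lt_succ hij, ?_, ?_⟩
          · rw [get_succ', hget0]; exact h1
          · rw [get_succ', hget0]; exact h2
        · refine hG y hy' i.succ j.succ (Nat.succ_lt_succ hij) ?_ ?_
          · rw [get_succ']; exact h1
          · rw [get_succ']; exact h2)
      (by
        intro y hy x' hx' hx'y
        rcases (hmem' y).1 hy with rfl | hy'
        · exact List.mem_cons_self
        · have hyrk := hB y hy' x' (List.mem_cons_of_mem _ hx') hx'y
          rcases lt_trichotomy y x with hlt | heq | hgt
          · obtain ⟨i, hi⟩ := List.mem_iff_get.1 hx'
            refine (hG y hy' ⟨0, Nat.succ_pos _⟩ i.succ (Nat.succ_pos _) ?_ ?_).elim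
            · rw [get_succ', hi]; exact hx'y
            · rw [hget0]; exact hlt
          · exact absurd (heq ▸ hy') hxk
          · exact List.mem_cons_of_mem _ (hspine y hyrk hgt))
    simp only [insertSplayCost, hsp, List.length_cons]
    omega

end ISP

end ISPAux

/-- Insertion splaying a (2,3,1)-avoiding sequence of `n` distinct keys,
starting from the empty tree, costs at most `6n`. -/
theorem insertSplay_preorder_linear {α : Type} [LinearOrder α]
    (π : List α) (hnd : π.Nodup) (hav : Avoids231 π) :
    insertSplayCost BT.leaf π ≤ 6 * π.length := by
  have := ISP.mainInd π BT.leaf (by simp [BT.keys]) (by simp [BT.keys]) hnd hav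
    (by simp [BT.keys]) (by simp [BT.keys])
  simpa [ISP.phi] using this
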